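/- Let G be a finite group with r(G) ≤ n. Then the homogeneous cover H(n,G) is homogeneous of rank n: Γ_n(H(n,G)) is nonempty and Aut(H(n,G)) acts transitively on Γ_n(H(n,G)). -/
import Mathlib


/-- `(x₁,…,xₙ)` is a generating sequence of `G`: the entries generate `G`. -/
def IsGenSeq {G : Type*} [Group G] {n : ℕ} (x : Fin n → G) : Prop :=
  Subgroup.closure (Set.range x) = ⊤

/-- `r(G)`: the least `n` such that `G` has a generating sequence of length `n`. -/
noncomputable def grank (G : Type*) [Group G] : ℕ :=
  sInf {n : ℕ | ∃ x : Fin n → G, IsGenSeq x}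

/-- `G` is homogeneous of rank `n`: `Γ_n(G)` is nonempty and `Aut(G)` acts
transitively on it. -/
def IsHomogeneous (G : Type*) [Group G] (n : ℕ) : Prop :=
  (∃ x : Fin n → G, IsGenSeq x) ∧
    ∀ x y : Fin n → G, IsGenSeq x → IsGenSeq y → ∃ f : G ≃* G, ∀ i, f (x i) = y i

/-- The intersection of the kernels of all surjective homomorphisms `F_n → G`. -/
def coverKer (n : ℕ) (G : Type*) [Group G] : Subgroup (FreeGroup (Fin n)) :=
  ⨅ f ∈ {f : FreeGroup (Fin n) →* G | Function.Surjective f}, MonoidHom.ker f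

instance coverKer_normal (n : ℕ) (G : Type*) [Group G] : (coverKer n G).Normal := by
  constructor
  intro x hx g
  simp only [coverKer, Subgroup.mem_iInf] at hx ⊢
  intro f hf
  exact (MonoidHom.normal_ker f).conj_mem x (hx f hf) g

/-- The homogeneous cover `H(n,G) = F_n / K`, where `K` is the intersection of the
kernels of all surjective homomorphisms `F_n → G`. -/
abbrev HomogeneousCover (n : ℕ) (G : Type*) [Group G] :=
  FreeGroup (Fin n) ⧸ coverKer n G


section CoverAux
variable {n : ℕ} {G : Type*} [Group G] [Finite G]

omit [Finite G] in
lemma mem_coverKer {w : FreeGroup (Fin n)} :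
    w ∈ coverKer n G ↔ ∀ f : FreeGroup (Fin n) →* G, Function.Surjective f → f w = 1 := by
  simp [coverKer, Subgroup.mem_iInf, MonoidHom.mem_ker]

noncomputable instance : Finite (FreeGroup (Fin n) →* G) :=
  Finite.of_equiv _ (FreeGroup.lift : (Fin n → G) ≃ _)

/-- Evaluation of all surjections `F_n → G` at once. -/
def coverΦ (n : ℕ) (G : Type*) [Group G] :
    FreeGroup (Fin n) →* ({f : FreeGroup (Fin n) →* G // Function.Surjective f} → G) where
  toFun w := fun s => s.1 w
  map_one' := by funext s; simp
  map_mul' x y := by funext s; simp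

omit [Finite G] in
lemma ker_coverΦ : MonoidHom.ker (coverΦ n G) = coverKer n G := by
  ext w
  rw [MonoidHom.mem_ker, mem_coverKer]
  simp [coverΦ, funext_iff, Subtype.forall]

instance cover_finite : Finite (HomogeneousCover n G) := by
  have hle : coverKer n G ≤ MonoidHom.ker (coverΦ n G) := ker_coverΦ.ge
  refine Finite.of_injective (QuotientGroup.lift (coverKer n G) (coverΦ n G) hle) ?_
  rw [injective_iff_map_eq_one]
  intro h hh
  induction h using QuotientGroup.induction_on with
  | H w =>
    rw [QuotientGroup.lift_mk'] at hh
    have hw : w ∈ MonoidHom.ker (coverΦ n G) := hh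
    rw [ker_coverΦ] at hw
    exact (QuotientGroup.eq_one_iff w).mpr hw

/-- Any length-`n` generating sequence of `H(n,G)` is the image of the canonical
generators under some automorphism. -/
lemma exists_aut_to (y : Fin n → HomogeneousCover n G) (hy : IsGenSeq y) :
    ∃ f : HomogeneousCover n G ≃* HomogeneousCover n G,
      ∀ i, f ((QuotientGroup.mk (FreeGroup.of i) : HomogeneousCover n G)) = y i := by
  set ψ : FreeGroup (Fin n) →* HomogeneousCover n G := FreeGroup.lift y with hψdef
  have hψsurj : Function.Surjective ψ := by
    rw [← MonoidHom.range_eq_top, FreeGroup.range_lift_eq_closure]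
    exact hy
  have hK : coverKer n G ≤ MonoidHom.ker ψ := by
    intro k hk
    rw [MonoidHom.mem_ker]
    obtain ⟨w, hw⟩ := QuotientGroup.mk_surjective (ψ k)
    rw [← hw, QuotientGroup.eq_one_iff, mem_coverKer]
    intro f hf
    have hKf : coverKer n G ≤ MonoidHom.ker f := by
      intro a ha
      exact MonoidHom.mem_ker.mpr (mem_coverKer.mp ha f hf)
    set q := QuotientGroup.lift _ f hKf with hqdef
    have hq : Function.Surjective q := by
      intro g
      obtain ⟨a, ha⟩ := hf g
      exact ⟨QuotientGroup.mk a, ha⟩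
    have h1 : (q.comp ψ) k = 1 := mem_coverKer.mp hk (q.comp ψ) (hq.comp hψsurj)
    calc f w = q (QuotientGroup.mk w) := rfl
    _ = q (ψ k) := by rw [hw]
    _ = 1 := h1
  set φ := QuotientGroup.lift (coverKer n G) ψ hK with hφdef
  have hφsurj : Function.Surjective φ := by
    intro h
    obtain ⟨w, hw⟩ := hψsurj h
    exact ⟨QuotientGroup.mk w, hw⟩
  have hφinj : Function.Injective φ := Finite.injective_iff_surjective.mpr hφsurj
  refine ⟨MulEquiv.ofBijective φ ⟨hφinj, hφsurj⟩, fun i => ?_⟩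
  show φ (QuotientGroup.mk (FreeGroup.of i)) = y i
  simp [hφdef, hψdef]

omit [Finite G] in
/-- The canonical generators form a generating sequence of `H(n,G)`. -/
lemma xbar_gen :
    IsGenSeq (fun i => (QuotientGroup.mk (FreeGroup.of i) : HomogeneousCover n G)) := by
  unfold IsGenSeq
  have : Set.range (fun i => (QuotientGroup.mk (FreeGroup.of i) : HomogeneousCover n G))
      = (QuotientGroup.mk' (coverKer n G)) '' (Set.range FreeGroup.of) := by
    rw [← Set.range_comp]; rfl
  rw [this, ← MonoidHom.map_closure, FreeGroup.closure_range_of, ← MonoidHom.range_eq_map,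
    MonoidHom.range_eq_top]
  exact QuotientGroup.mk'_surjective _

end CoverAux

/-- `H(n,G)` is homogeneous of rank `n`. -/
theorem cover_isHomogeneous (G : Type*) [Group G] [Finite G] (n : ℕ)
    (hr : grank G ≤ n) : IsHomogeneous (HomogeneousCover n G) n := by
  refine ⟨⟨_, xbar_gen⟩, fun x y hx hy => ?_⟩
  obtain ⟨fx, hfx⟩ := exists_aut_to x hx
  obtain ⟨fy, hfy⟩ := exists_aut_to y hy
  refine ⟨fx.symm.trans fy, fun i => ?_⟩
  have h1 : fx.symm (x i) = QuotientGroup.mk (FreeGroup.of i) := by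
    rw [← hfx i, MulEquiv.symm_apply_apply]
  simp [MulEquiv.trans_apply, h1, hfy i]
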